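/- Let X_1, …, X_h ∈ R. (i) If f(X_i) = 0 for all i, then g(μ(X_1, …, X_h)) = 0. (ii) If the polynomial ∏_{c ∈ F_q^h} (T − (c_1X_1 + ⋯ + c_hX_h)) divides f(T) = πT + u_1T^q + ⋯ + u_{h−1}T^{q^{h−1}} + T^{q^h} in R[T], then this product equals f(T), μ(X_1, …, X_h)^{q−1} = (−1)^h π, and ∏_{a ∈ F_q} (T − a·μ(X_1, …, X_h)) = (−1)^{h−1} g(T) in R[T]. -/

import Mathlib

open Finset

noncomputable section

/-- The Moore determinant `μ(X₁, …, X_h) = det (Xᵢ^{q^{j-1}})`. -/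
def moore (q : ℕ) {h : ℕ} {R : Type*} [CommRing R] (X : Fin h → R) : R :=
  Matrix.det (Matrix.of fun i j : Fin h => X i ^ q ^ (j : ℕ))

/-- `f(X) = πX + u₁X^q + ⋯ + u_{h−1}X^{q^{h−1}} + X^{q^h}`. -/
def fmap (q h : ℕ) {R : Type*} [CommRing R] (π : R) (u : ℕ → R) (X : R) : R :=
  π * X + (∑ k ∈ Finset.Ico 1 h, u k * X ^ q ^ k) + X ^ q ^ h

/-- `g(T) = πT + (−1)^{h−1}T^q`. -/
def gmap (q h : ℕ) {R : Type*} [CommRing R] (π : R) (T : R) : R :=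
  π * T + (-1) ^ (h - 1) * T ^ q

/-- `f(T)` as a polynomial in `R[T]`. -/
def fPoly (q h : ℕ) {R : Type*} [CommRing R] (π : R) (u : ℕ → R) : Polynomial R :=
  Polynomial.C π * Polynomial.X
    + (∑ k ∈ Finset.Ico 1 h, Polynomial.C (u k) * Polynomial.X ^ q ^ k)
    + Polynomial.X ^ q ^ h

/-- `g(T)` as a polynomial in `R[T]`. -/
def gPoly (q h : ℕ) {R : Type*} [CommRing R] (π : R) : Polynomial R :=
  Polynomial.C π * Polynomial.X + Polynomial.C ((-1 : R) ^ (h - 1)) * Polynomial.X ^ q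

section AuxLemmas
open Polynomial

set_option linter.unusedSectionVars false

lemma aux_dvd_eq {S : Type*} [CommRing S] [Nontrivial S] {P f : S[X]}
    (hP : P.Monic) (hf : f.Monic) (hdeg : f.natDegree ≤ P.natDegree) (hdvd : P ∣ f) : P = f := by
  obtain ⟨w, hw⟩ := hdvd
  have hw0 : w ≠ 0 := by rintro rfl; simp at hw; exact hf.ne_zero hw
  have hl : P.leadingCoeff * w.leadingCoeff ≠ 0 := by
    rw [hP.leadingCoeff, one_mul]; exact leadingCoeff_ne_zero.mpr hw0
  have hdd : f.natDegree = P.natDegree + w.natDegree := by rw [hw, natDegree_mul' hl]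
  have hwdeg : w.natDegree = 0 := by omega
  have hwc : w = C (w.coeff 0) := eq_C_of_natDegree_eq_zero hwdeg
  have hlc : f.leadingCoeff = P.leadingCoeff * w.leadingCoeff := by rw [hw, leadingCoeff_mul' hl]
  rw [hf.leadingCoeff, hP.leadingCoeff, one_mul] at hlc
  have hc1 : w.coeff 0 = 1 := by
    unfold leadingCoeff at hlc; rw [hwdeg] at hlc; exact hlc.symm
  rw [hw, hwc, hc1, map_one, mul_one]

lemma aux_prod_dvd {A : Type*} [CommRing A] [IsDomain A] {ι : Type*} [Fintype ι] [DecidableEq ι]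
    (r : ι → A) (hr : Function.Injective r) {f : A[X]} (hf : f ≠ 0)
    (hroot : ∀ i, f.IsRoot (r i)) : (∏ i, (X - C (r i))) ∣ f := by
  have hnd : (Multiset.map r Finset.univ.val).Nodup := Finset.univ.nodup.map hr
  have hle : Multiset.map r Finset.univ.val ≤ f.roots := by
    rw [Multiset.le_iff_subset hnd]
    intro a ha
    obtain ⟨i, _, rfl⟩ := Multiset.mem_map.mp ha
    exact mem_roots'.mpr ⟨hf, hroot i⟩
  have := Multiset.prod_dvd_prod_of_le (Multiset.map_le_map (f := fun a => X - C a) hle)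
  refine dvd_trans ?_ (this.trans (prod_multiset_X_sub_C_dvd f))
  rw [Finset.prod_eq_multiset_prod, Multiset.map_map]
  exact dvd_refl _

lemma aux_coeff_one_prod {S : Type*} [CommRing S] {ι : Type*} [Fintype ι] [DecidableEq ι]
    (r : ι → S) (i0 : ι) (h0 : r i0 = 0) :
    (∏ i, (X - C (r i))).coeff 1
      = (-1) ^ (Fintype.card ι - 1) * ∏ i ∈ Finset.univ.erase i0, r i := by
  rw [← Finset.mul_prod_erase Finset.univ _ (Finset.mem_univ i0), h0, map_zero, sub_zero,
    coeff_X_mul, coeff_zero_eq_eval_zero, eval_prod]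
  simp only [eval_sub, eval_X, eval_C, zero_sub]
  have : ∀ x ∈ Finset.univ.erase i0, -r x = (-1) * r x := by intros; ring
  rw [Finset.prod_congr rfl this, Finset.prod_mul_distrib, Finset.prod_const,
    Finset.card_erase_of_mem (Finset.mem_univ i0), Finset.card_univ]

lemma aux_det_pow {S : Type*} [CommRing S] {p : ℕ} [ExpChar S p] (e : ℕ) {n : ℕ}
    (M : Matrix (Fin n) (Fin n) S) :
    (Matrix.of fun i j => (M i j) ^ p ^ e).det = M.det ^ p ^ e := by
  have h := RingHom.map_det (iterateFrobenius S p e) M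
  simp only [iterateFrobenius_def] at h
  rw [h]
  rfl

lemma aux_neg_one_pow {S : Type*} [Ring S] {p : ℕ} (hp : p.Prime) [CharP S p] (n : ℕ) :
    ((-1 : S)) ^ (p ^ n - 1) = 1 := by
  rcases hp.eq_two_or_odd' with h2 | hodd
  · subst h2
    rw [CharTwo.neg_eq]
    exact one_pow _
  · have ho : Odd (p ^ n) := hodd.pow
    have hp1 : 1 ≤ p ^ n := Nat.one_le_pow _ _ hp.pos
    refine Even.neg_one_pow ?_
    rcases ho with ⟨k, hk⟩
    exact ⟨k, by omega⟩

lemma aux_moore_pow_q {S : Type*} [CommRing S] {p : ℕ} [ExpChar S p] {e q : ℕ} (hq : q = p ^ e)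
    {n : ℕ} (X : Fin n → S) :
    (Matrix.of fun i j : Fin n => X i ^ q ^ ((j : ℕ) + 1)).det = (moore q X) ^ q := by
  subst hq
  have h2 : (Matrix.of fun i j : Fin n => X i ^ (p^e) ^ ((j : ℕ) + 1))
      = Matrix.of fun i j : Fin n =>
        ((Matrix.of fun i' j' : Fin n => X i' ^ (p^e) ^ (j' : ℕ)) i j) ^ p ^ e := by
    funext i j
    simp only [Matrix.of_apply, ← pow_mul]
    congr 1
    ring
  rw [h2, aux_det_pow e]
  rfl

lemma part_one {S : Type*} [CommRing S] {p : ℕ} [ExpChar S p] {e q : ℕ} (hq : q = p ^ e)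
    {m : ℕ} (π : S) (u : ℕ → S) (X : Fin (m+1) → S)
    (hf : ∀ i, fmap q (m+1) π u (X i) = 0) :
    gmap q (m+1) π (moore q X) = 0 := by
  set M : Matrix (Fin (m+1)) (Fin (m+1)) S := Matrix.of fun i j => X i ^ q ^ (j : ℕ) with hM
  have hmoore : moore q X = M.det := rfl
  set D : Matrix (Fin (m+1)) (Fin (m+1)) S := M.submatrix id (finRotate (m+1)) with hD
  have hDdet : D.det = (-1) ^ m * M.det := by
    rw [hD, Matrix.det_permute' (finRotate (m+1)) M, sign_finRotate]
    push_cast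
    ring
  have hDlast : ∀ i, D i (Fin.last m) = X i := by
    intro i
    simp only [hD, Matrix.submatrix_apply, id_eq, finRotate_last, hM, Matrix.of_apply]
    norm_num
  have hDcast : ∀ i (k : Fin m), D i k.castSucc = X i ^ q ^ ((k : ℕ) + 1) := by
    intro i k
    have hne : k.castSucc ≠ Fin.last m := (Fin.castSucc_lt_last k).ne
    simp only [hD, Matrix.submatrix_apply, id_eq, hM, Matrix.of_apply]
    rw [coe_finRotate_of_ne_last hne, Fin.coe_castSucc]
  set c : Fin (m+1) → S := fun k => if k = Fin.last m then -π else -u ((k : ℕ) + 1) with hc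
  have hclast : c (Fin.last m) = -π := by rw [hc]; simp
  have hccast : ∀ k : Fin m, c k.castSucc = -u ((k : ℕ) + 1) := by
    intro k
    rw [hc]
    simp only [if_neg (Fin.castSucc_lt_last k).ne, Fin.coe_castSucc]
  have hcol : ∀ i, X i ^ q ^ (m+1) = ∑ k, c k • D i k := by
    intro i
    have h0 := hf i
    unfold fmap at h0
    rw [Fin.sum_univ_castSucc, hclast, hDlast]
    have hcc : ∀ k : Fin m, c k.castSucc • D i k.castSucc
        = -(u ((k:ℕ)+1) * X i ^ q ^ ((k:ℕ)+1)) := by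
      intro k
      rw [hccast, hDcast, smul_eq_mul]
      ring
    rw [Finset.sum_congr rfl fun k _ => hcc k]
    have hs : ∑ k ∈ Finset.Ico 1 (m+1), u k * X i ^ q ^ k
        = ∑ k : Fin m, u ((k:ℕ)+1) * X i ^ q ^ ((k:ℕ)+1) := by
      rw [Finset.sum_Ico_eq_sum_range]
      simp only [Nat.add_sub_cancel]
      rw [Fin.sum_univ_eq_sum_range (fun k => u (k+1) * X i ^ q ^ (k+1)) m]
      exact Finset.sum_congr rfl fun k _ => by rw [Nat.add_comm]
    rw [hs] at h0
    rw [Finset.sum_neg_distrib, smul_eq_mul]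
    linear_combination h0
  have hM' : (Matrix.of fun i j : Fin (m+1) => X i ^ q ^ ((j : ℕ) + 1))
      = D.updateCol (Fin.last m) (fun i => ∑ k, c k • D i k) := by
    funext i j
    rcases eq_or_ne j (Fin.last m) with rfl | hne
    · rw [Matrix.updateCol_apply, if_pos rfl, ← hcol i]
      simp only [Matrix.of_apply, Fin.val_last]
    · rw [Matrix.updateCol_apply, if_neg hne]
      obtain ⟨k, rfl⟩ := Fin.exists_castSucc_eq.mpr hne
      rw [hDcast]
      simp only [Matrix.of_apply, Fin.coe_castSucc]
  have key : M.det ^ q = -π * D.det := by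
    have hmq : moore q X ^ q = (Matrix.of fun i j : Fin (m+1) => X i ^ q ^ ((j : ℕ) + 1)).det :=
      (aux_moore_pow_q hq X).symm
    rw [hmoore] at hmq
    rw [hmq, hM', Matrix.det_updateCol_sum D (Fin.last m) c, hclast, smul_eq_mul]
  unfold gmap
  rw [hmoore]
  simp only [Nat.add_sub_cancel]
  rw [key, hDdet]
  have h4 : ((-1:S))^m * ((-1:S))^m = 1 := by
    rw [← pow_add, ← two_mul, pow_mul, neg_one_sq, one_pow]
  linear_combination (-(π * M.det)) * h4

lemma aux_moore_ne_zero {K : Type*} [CommRing K] [Nontrivial K] {q h : ℕ} (hq2 : 2 ≤ q) :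
    moore q (fun i => (MvPolynomial.X i : MvPolynomial (Fin h) K)) ≠ 0 := by
  classical
  set d : Equiv.Perm (Fin h) → ((Fin h) →₀ ℕ) :=
    fun σ => Finsupp.equivFunOnFinite.symm (fun j => q ^ ((σ⁻¹ j : Fin h) : ℕ)) with hd
  have happ : ∀ σ j, d σ j = q ^ ((σ⁻¹ j : Fin h) : ℕ) := fun σ j => rfl
  have hsupp : ∀ σ, (d σ).support = Finset.univ := by
    intro σ
    apply Finset.eq_univ_of_forall
    intro j
    rw [Finsupp.mem_support_iff, happ]
    positivity
  have hprod : ∀ σ : Equiv.Perm (Fin h),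
      (∏ i, (MvPolynomial.X (σ i) : MvPolynomial (Fin h) K) ^ q ^ (i : ℕ))
        = MvPolynomial.monomial (d σ) 1 := by
    intro σ
    rw [← MvPolynomial.prod_X_pow_eq_monomial, hsupp σ]
    rw [← Equiv.prod_comp σ (fun j => (MvPolynomial.X j : MvPolynomial (Fin h) K) ^ (d σ) j)]
    refine Finset.prod_congr rfl fun i _ => ?_
    rw [happ]
    simp
  have hinj : ∀ σ : Equiv.Perm (Fin h), d σ = d 1 → σ = 1 := by
    intro σ hσ
    have hfix : ∀ j, σ⁻¹ j = j := by
      intro j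
      have h1 := Finsupp.ext_iff.mp hσ j
      rw [happ, happ] at h1
      have h2 := Nat.pow_right_injective hq2 h1
      have h3 : (σ⁻¹ j) = ((1 : Equiv.Perm (Fin h))⁻¹ j) := Fin.ext h2
      simpa using h3
    have h4 : σ⁻¹ = 1 := Equiv.ext hfix
    exact inv_eq_one.mp h4
  have hco : (moore q (fun i => (MvPolynomial.X i : MvPolynomial (Fin h) K))).coeff (d 1) = 1 := by
    unfold moore
    rw [Matrix.det_apply']
    have hterm : ∀ σ : Equiv.Perm (Fin h),
        (((Equiv.Perm.sign σ : ℤ) : MvPolynomial (Fin h) K) *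
          ∏ i, (Matrix.of fun i j : Fin h => (MvPolynomial.X i : MvPolynomial (Fin h) K) ^ q ^ (j : ℕ)) (σ i) i)
        = (Equiv.Perm.sign σ : ℤ) • MvPolynomial.monomial (d σ) (1 : K) := by
      intro σ
      rw [zsmul_eq_mul]
      congr 1
      rw [← hprod σ]
      rfl
    rw [Finset.sum_congr rfl fun σ _ => hterm σ, MvPolynomial.coeff_sum]
    rw [Finset.sum_eq_single (1 : Equiv.Perm (Fin h))]
    · simp [MvPolynomial.coeff_monomial]
    · intro σ _ hσ
      rw [MvPolynomial.coeff_smul, MvPolynomial.coeff_monomial,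
        if_neg (fun hc => hσ (hinj σ hc)), smul_zero]
    · intro hmem
      exact absurd (Finset.mem_univ _) hmem
  intro h0
  rw [h0] at hco
  simp at hco

-- Moore determinant with an extra generic last row, as polynomial
section Delta
variable {K : Type*} [Field K] [Fintype K] [DecidableEq K] {p e q h : ℕ}

local notation "A" => MvPolynomial (Fin h) K

def lc (c : Fin h → K) : MvPolynomial (Fin h) K := ∑ i, MvPolynomial.C (c i) * MvPolynomial.X i

def NN (q h : ℕ) (K : Type*) [Field K] : Matrix (Fin (h+1)) (Fin (h+1)) (Polynomial (MvPolynomial (Fin h) K)) :=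
  Matrix.of fun i j =>
    Fin.lastCases (Polynomial.X ^ q ^ (j : ℕ))
      (fun i' => Polynomial.C ((MvPolynomial.X i' : MvPolynomial (Fin h) K) ^ q ^ (j : ℕ))) i

def minor (q h : ℕ) (K : Type*) [Field K] (j : Fin (h+1)) : MvPolynomial (Fin h) K :=
  Matrix.det (Matrix.of fun i' j' : Fin h =>
    (MvPolynomial.X i' : MvPolynomial (Fin h) K) ^ q ^ ((j.succAbove j' : ℕ)))

lemma NN_det_eq : (NN q h K).det
    = ∑ j : Fin (h+1), Polynomial.C ((-1) ^ (h + (j:ℕ)) * minor q h K j) * Polynomial.X ^ q ^ (j:ℕ) := by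
  rw [Matrix.det_succ_row (NN q h K) (Fin.last h)]
  refine Finset.sum_congr rfl fun j _ => ?_
  have h1 : NN q h K (Fin.last h) j = Polynomial.X ^ q ^ (j:ℕ) := by
    unfold NN; simp [Fin.lastCases_last]
  have h2 : (NN q h K).submatrix (Fin.last h).succAbove j.succAbove
      = (Polynomial.C (R := MvPolynomial (Fin h) K)).mapMatrix
          (Matrix.of fun i' j' : Fin h =>
            (MvPolynomial.X i' : MvPolynomial (Fin h) K) ^ q ^ ((j.succAbove j' : ℕ))) := by
    funext i' j'
    unfold NN
    simp only [Matrix.submatrix_apply, RingHom.mapMatrix_apply, Matrix.map_apply, Matrix.of_apply,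
      Fin.succAbove_last]
    rw [Fin.lastCases_castSucc]
  rw [h1, h2, ← RingHom.map_det]
  unfold minor
  rw [Fin.val_last, map_mul, map_pow, map_neg, map_one]
  ring
end Delta

section Delta2
variable {K : Type*} [Field K] [Fintype K] [DecidableEq K] {p e q h : ℕ}

lemma minor_last : minor q h K (Fin.last h)
    = moore q (fun i => (MvPolynomial.X i : MvPolynomial (Fin h) K)) := by
  unfold minor moore
  congr 1
  funext i' j'
  rw [Matrix.of_apply, Matrix.of_apply, Fin.succAbove_last, Fin.coe_castSucc]

lemma minor_zero [CharP K p] (hp : p.Prime) (hq : q = p ^ e) :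
    minor q h K 0 = moore q (fun i => (MvPolynomial.X i : MvPolynomial (Fin h) K)) ^ q := by
  haveI : ExpChar (MvPolynomial (Fin h) K) p := ExpChar.prime hp
  rw [← aux_moore_pow_q (p := p) (e := e) hq]
  unfold minor
  congr 1

lemma NN_coeff_one (hq2 : 2 ≤ q) :
    (NN q h K).det.coeff 1 = (-1) ^ h * minor q h K 0 := by
  rw [NN_det_eq, Polynomial.finset_sum_coeff]
  rw [Finset.sum_eq_single (0 : Fin (h+1))]
  · rw [Polynomial.coeff_C_mul, Polynomial.coeff_X_pow]
    norm_num
  · intro j _ hj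
    rw [Polynomial.coeff_C_mul, Polynomial.coeff_X_pow, if_neg, mul_zero]
    intro hqj
    have hj0 : (j : ℕ) ≠ 0 := fun hc => hj (Fin.ext hc)
    have h5 : q ^ (j:ℕ) ≥ q ^ 1 := Nat.pow_le_pow_right (by omega) (by omega)
    rw [pow_one] at h5
    omega
  · intro hmem; exact absurd (Finset.mem_univ _) hmem

lemma NN_coeff_top (hq2 : 2 ≤ q) :
    (NN q h K).det.coeff (q ^ h) = minor q h K (Fin.last h) := by
  rw [NN_det_eq, Polynomial.finset_sum_coeff]
  rw [Finset.sum_eq_single (Fin.last h)]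
  · rw [Polynomial.coeff_C_mul, Polynomial.coeff_X_pow, Fin.val_last, if_pos rfl, mul_one,
      ← two_mul, pow_mul, neg_one_sq, one_pow, one_mul]
  · intro j _ hj
    rw [Polynomial.coeff_C_mul, Polynomial.coeff_X_pow, if_neg, mul_zero]
    intro hqj
    have hjlt : (j : ℕ) < h := by
      have := j.isLt
      rcases Nat.lt_succ_iff_lt_or_eq.mp this with h1 | h1
      · exact h1
      · exact absurd (Fin.ext h1) hj
    have : q ^ (j:ℕ) < q ^ h := Nat.pow_lt_pow_right (by omega) hjlt
    omega
  · intro hmem; exact absurd (Finset.mem_univ _) hmem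

lemma NN_natDegree_le (hq2 : 2 ≤ q) : (NN q h K).det.natDegree ≤ q ^ h := by
  rw [NN_det_eq]
  refine Polynomial.natDegree_sum_le_of_forall_le _ _ fun j _ => ?_
  refine le_trans (Polynomial.natDegree_mul_le) ?_
  rw [Polynomial.natDegree_C, Polynomial.natDegree_X_pow, zero_add]
  exact Nat.pow_le_pow_right (by omega) (Nat.lt_succ_iff.mp j.isLt)
end Delta2

section Delta3
variable {K : Type*} [Field K] [Fintype K] [DecidableEq K] {p e q h : ℕ}

lemma lc_injective : Function.Injective (lc (K := K) (h := h)) := by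
  intro c c' hcc
  funext j
  have h1 := congrArg (MvPolynomial.coeff (Finsupp.single j 1)) hcc
  have key : ∀ c'' : Fin h → K, MvPolynomial.coeff (Finsupp.single j 1) (lc c'') = c'' j := by
    intro c''
    unfold lc
    rw [MvPolynomial.coeff_sum]
    rw [Finset.sum_eq_single j]
    · rw [MvPolynomial.coeff_C_mul, MvPolynomial.coeff_X, if_pos rfl, mul_one]
    · intro i _ hij
      rw [MvPolynomial.coeff_C_mul, MvPolynomial.coeff_X', if_neg, mul_zero]
      intro hc
      exact hij (by
        have := Finsupp.single_left_injective (α := Fin h) (one_ne_zero) hc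
        exact this)
    · intro hmem; exact absurd (Finset.mem_univ _) hmem
  rw [key, key] at h1
  exact h1

lemma lc_zero : lc (K := K) (h := h) 0 = 0 := by
  unfold lc; simp

lemma NN_isRoot [CharP K p] (hp : p.Prime) (hq : q = p ^ e) (hK : Fintype.card K = q)
    (c : Fin h → K) : ((NN q h K).det).IsRoot (lc c) := by
  haveI : ExpChar (MvPolynomial (Fin h) K) p := ExpChar.prime hp
  set A' := MvPolynomial (Fin h) K
  set ev : Polynomial A' →+* A' := Polynomial.evalRingHom (lc c) with hev
  have h1 : Polynomial.IsRoot ((NN q h K).det) (lc c) ↔ ev ((NN q h K).det) = 0 := Iff.rfl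
  rw [h1, RingHom.map_det]
  set Mc : Matrix (Fin (h+1)) (Fin (h+1)) A' := ev.mapMatrix (NN q h K) with hMc
  have hrow : ∀ (i' : Fin h) (j : Fin (h+1)), Mc (Fin.castSucc i') j
      = (MvPolynomial.X i' : A') ^ q ^ (j : ℕ) := by
    intro i' j
    simp only [hMc, RingHom.mapMatrix_apply, Matrix.map_apply]
    unfold NN
    rw [Matrix.of_apply, Fin.lastCases_castSucc]
    simp [hev]
  have hlast : ∀ j : Fin (h+1), Mc (Fin.last h) j = (lc c) ^ q ^ (j : ℕ) := by
    intro j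
    simp only [hMc, RingHom.mapMatrix_apply, Matrix.map_apply]
    unfold NN
    rw [Matrix.of_apply, Fin.lastCases_last]
    simp [hev]
  -- last row is a linear combination of the others
  set cc : Fin (h+1) → A' := Fin.lastCases 0 (fun i' => MvPolynomial.C (c i')) with hcc
  have hcomb : ∀ j : Fin (h+1), Mc (Fin.last h) j = ∑ k, cc k • Mc k j := by
    intro j
    rw [hlast, Fin.sum_univ_castSucc]
    simp only [hcc, Fin.lastCases_last, Fin.lastCases_castSucc, zero_smul, add_zero]
    unfold lc
    have hqe : q ^ (j:ℕ) = p ^ (e * (j:ℕ)) := by rw [hq, ← pow_mul]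
    calc (∑ i, MvPolynomial.C (c i) * MvPolynomial.X i) ^ q ^ (j:ℕ)
        = ∑ i, (MvPolynomial.C (c i) * MvPolynomial.X i) ^ q ^ (j:ℕ) := by
          rw [hqe]
          exact map_sum (iterateFrobenius A' p (e * (j:ℕ)))
            (fun i => MvPolynomial.C (c i) * MvPolynomial.X i) Finset.univ
      _ = ∑ x : Fin h, MvPolynomial.C (c x) • Mc x.castSucc j := by
          refine Finset.sum_congr rfl fun i _ => ?_
          rw [hrow, smul_eq_mul, mul_pow, ← map_pow]
          congr 2
          rw [← hK]
          exact FiniteField.pow_card_pow _ _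
  have hupd : Mc.updateRow (Fin.last h) (∑ k, cc k • Mc k) = Mc := by
    have hfun : (∑ k, cc k • Mc k) = Mc (Fin.last h) := by
      funext j
      rw [Finset.sum_apply]
      simp only [Pi.smul_apply]
      exact (hcomb j).symm
    rw [hfun]
    exact Matrix.updateRow_eq_self Mc (Fin.last h)
  have := Matrix.det_updateRow_sum Mc (Fin.last h) cc
  rw [hupd] at this
  rw [this]
  simp [hcc]
end Delta3

lemma aux_moore_identity {K : Type*} [Field K] [Fintype K] [DecidableEq K] {p e q h : ℕ}
    [CharP K p] (hp : p.Prime) (hq : q = p ^ e) (he : 1 ≤ e) (hK : Fintype.card K = q) :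
    moore q (fun i => (MvPolynomial.X i : MvPolynomial (Fin h) K)) ^ (q - 1)
      = (-1) ^ h * ∏ c ∈ Finset.univ.erase (0 : Fin h → K), lc c := by
  have hq2 : 2 ≤ q := by
    rw [hq]
    exact Nat.one_lt_pow (by omega) hp.one_lt
  set A' := MvPolynomial (Fin h) K with hA'
  haveI : CharP A' p := by unfold A'; infer_instance
  haveI : ExpChar A' p := ExpChar.prime hp
  set μ := moore q (fun i => (MvPolynomial.X i : A')) with hμdef
  have hμ : μ ≠ 0 := aux_moore_ne_zero hq2
  set Δ := (NN q h K).det with hΔdef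
  have hco_top : Δ.coeff (q ^ h) = μ := by rw [hΔdef, NN_coeff_top hq2, minor_last]
  have hco_one : Δ.coeff 1 = (-1) ^ h * μ ^ q := by
    rw [hΔdef, NN_coeff_one hq2, minor_zero (p := p) (e := e) hp hq]
  have hΔne : Δ ≠ 0 := fun hc => hμ (by rw [← hco_top, hc, Polynomial.coeff_zero])
  set P : Polynomial A' := ∏ c : Fin h → K, (Polynomial.X - Polynomial.C (lc c)) with hPdef
  have hPm : P.Monic := Polynomial.monic_prod_of_monic _ _ fun _ _ => Polynomial.monic_X_sub_C _
  have hcard : Fintype.card (Fin h → K) = q ^ h := by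
    rw [Fintype.card_fun, Fintype.card_fin, hK]
  have hPdeg : P.natDegree = q ^ h := by
    rw [hPdef, Polynomial.natDegree_prod_of_monic _ _ fun _ _ => Polynomial.monic_X_sub_C _]
    simp [Polynomial.natDegree_X_sub_C, hcard]
  have hdvd : P ∣ Δ := aux_prod_dvd lc lc_injective hΔne
    (fun c => NN_isRoot (p := p) (e := e) hp hq hK c)
  obtain ⟨w, hw⟩ := hdvd
  have hw0 : w ≠ 0 := by rintro rfl; rw [mul_zero] at hw; exact hΔne hw
  have hl : P.leadingCoeff * w.leadingCoeff ≠ 0 := by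
    rw [hPm.leadingCoeff, one_mul]; exact Polynomial.leadingCoeff_ne_zero.mpr hw0
  have hdd : Δ.natDegree = q ^ h + w.natDegree := by
    rw [hw, Polynomial.natDegree_mul' hl, hPdeg]
  have hddle : Δ.natDegree ≤ q ^ h := NN_natDegree_le hq2
  have hwdeg : w.natDegree = 0 := by omega
  have hwc : w = Polynomial.C (w.coeff 0) := Polynomial.eq_C_of_natDegree_eq_zero hwdeg
  have hw0eq : w.coeff 0 = μ := by
    have h6 : Δ.coeff (q ^ h) = P.coeff (q ^ h) * w.coeff 0 := by
      rw [hw, hwc, Polynomial.coeff_mul_C]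
      simp
    rw [hco_top] at h6
    have h7 : P.coeff (q ^ h) = 1 := by
      rw [← hPdeg]; exact hPm.coeff_natDegree
    rw [h7, one_mul] at h6
    exact h6.symm
  have hcoP : P.coeff 1 = ∏ c ∈ Finset.univ.erase (0 : Fin h → K), lc c := by
    rw [hPdef, aux_coeff_one_prod lc 0 lc_zero, hcard]
    have h8 : ((-1 : A')) ^ (q ^ h - 1) = 1 := by
      have : q ^ h = p ^ (e * h) := by rw [hq, ← pow_mul]
      rw [this]
      exact aux_neg_one_pow hp (e * h)
    rw [h8, one_mul]
  have key : (-1 : A') ^ h * μ ^ q = (∏ c ∈ Finset.univ.erase (0 : Fin h → K), lc c) * μ := by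
    rw [← hco_one, hw, hwc, Polynomial.coeff_mul_C, hcoP, hw0eq]
  have h4 : ((-1 : A')) ^ h * (-1) ^ h = 1 := by
    rw [← pow_add, ← two_mul, pow_mul, neg_one_sq, one_pow]
  have hqsplit : μ ^ q = μ * μ ^ (q - 1) := by
    rw [← pow_succ']
    congr 1
    omega
  refine mul_left_cancel₀ hμ ?_
  rw [← hqsplit]
  linear_combination ((-1 : A') ^ h) * key - (μ ^ q) * h4

-- the universal ∏_{a∈K}(X - a Y) = X^q - Y^{q-1} X identity in K[Y][X]
lemma aux_prod_linear_univ {K : Type*} [Field K] [Fintype K] [DecidableEq K] {q : ℕ}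
    (hK : Fintype.card K = q) (hq2 : 2 ≤ q) :
    (∏ a : K, (X - C (Polynomial.C a * Polynomial.X) : Polynomial (Polynomial K)))
      = X ^ q - C ((Polynomial.X : Polynomial K) ^ (q - 1)) * X := by
  set f : Polynomial (Polynomial K) := X ^ q - C ((Polynomial.X : Polynomial K) ^ (q - 1)) * X with hf
  have hfm : f.Monic := by
    rw [hf, sub_eq_add_neg]
    refine monic_X_pow_add ?_
    have h1 : (-(C ((Polynomial.X : Polynomial K) ^ (q - 1)) * X)).natDegree ≤ 1 := by
      rw [natDegree_neg]
      exact le_trans natDegree_mul_le (by simp)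
    have h1' : (-(C ((Polynomial.X : Polynomial K) ^ (q - 1)) * X)).degree ≤ ((1:ℕ) : WithBot ℕ) :=
      natDegree_le_iff_degree_le.mp h1
    have h2' : ((1:ℕ) : WithBot ℕ) < ((q:ℕ) : WithBot ℕ) := by
      exact_mod_cast (show (1:ℕ) < q by omega)
    exact lt_of_le_of_lt h1' h2'
  have hfne : f ≠ 0 := hfm.ne_zero
  have hr : Function.Injective (fun a : K => (Polynomial.C a * Polynomial.X : Polynomial K)) := by
    intro a a' haa
    have h5 := congrArg (fun z : Polynomial K => Polynomial.coeff z 1) haa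
    simp only [Polynomial.coeff_C_mul, Polynomial.coeff_X_one, mul_one] at h5
    exact h5
  have hroot : ∀ a : K, f.IsRoot (Polynomial.C a * Polynomial.X : Polynomial K) := by
    intro a
    rw [hf, IsRoot, eval_sub, eval_pow, eval_X, eval_mul, eval_C, eval_X]
    rw [mul_pow, ← map_pow]
    rw [show a ^ q = a by rw [← hK]; exact FiniteField.pow_card a]
    have hsplit : (Polynomial.X : Polynomial K) ^ q = Polynomial.X ^ (q - 1) * Polynomial.X := by
      rw [← pow_succ]
      congr 1
      omega
    rw [hsplit]
    ring
  have hdvd := aux_prod_dvd _ hr hfne hroot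
  have hPm : (∏ a : K, (X - C (Polynomial.C a * Polynomial.X) : Polynomial (Polynomial K))).Monic :=
    monic_prod_of_monic _ _ fun _ _ => monic_X_sub_C _
  have hPdeg : (∏ a : K, (X - C (Polynomial.C a * Polynomial.X) : Polynomial (Polynomial K))).natDegree = q := by
    have h2 : ∀ a : K, (X - C (Polynomial.C a * Polynomial.X) : Polynomial (Polynomial K)).natDegree = 1 :=
      fun a => natDegree_X_sub_C _
    rw [natDegree_prod_of_monic _ _ fun _ _ => monic_X_sub_C _,
      Finset.sum_congr rfl fun a _ => h2 a]
    simp [hK]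
  have hfdeg : f.natDegree ≤ q := by
    rw [hf]
    refine le_trans (natDegree_sub_le _ _) ?_
    simp only [natDegree_X_pow]
    have h3 : (C ((Polynomial.X : Polynomial K) ^ (q - 1)) * X).natDegree ≤ 1 :=
      le_trans natDegree_mul_le (by simp)
    omega
  exact aux_dvd_eq hPm hfm (by rw [hPdeg]; exact hfdeg) hdvd

end AuxLemmas

open Polynomial

/-- (i) If `f(Xᵢ) = 0` for all `i`, then `g(μ(X₁, …, X_h)) = 0`.
(ii) If `∏_{c ∈ F_q^h} (T − (c₁X₁ + ⋯ + c_hX_h))` divides `f(T)` in `R[T]`, then this product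
equals `f(T)`, `μ(X₁, …, X_h)^{q−1} = (−1)^h π`, and
`∏_{a ∈ F_q} (T − a·μ(X₁, …, X_h)) = (−1)^{h−1} g(T)` in `R[T]`. -/
theorem moore_of_torsion_and_drinfeld_basis
    (p e q h : ℕ) (hp : p.Prime) (he : 1 ≤ e) (hq : q = p ^ e) (hh : 1 ≤ h)
    (K : Type*) [Field K] [Fintype K] [DecidableEq K] (hK : Fintype.card K = q)
    (R : Type*) [CommRing R] [Algebra K R]
    (π : R) (u : ℕ → R) (X : Fin h → R) :
    ((∀ i, fmap q h π u (X i) = 0) → gmap q h π (moore q X) = 0)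
    ∧
    ((∏ c : Fin h → K,
        (Polynomial.X - Polynomial.C (∑ i, algebraMap K R (c i) * X i))) ∣ fPoly q h π u →
      ((∏ c : Fin h → K,
          (Polynomial.X - Polynomial.C (∑ i, algebraMap K R (c i) * X i))) = fPoly q h π u
        ∧ moore q X ^ (q - 1) = (-1) ^ h * π
        ∧ (∏ a : K, (Polynomial.X - Polynomial.C (algebraMap K R a * moore q X)))
            = Polynomial.C ((-1 : R) ^ (h - 1)) * gPoly q h π)) := by
  rcases subsingleton_or_nontrivial R with hR | hR
  · exact ⟨fun _ => Subsingleton.elim _ _,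
      fun _ => ⟨Subsingleton.elim _ _, Subsingleton.elim _ _, Subsingleton.elim _ _⟩⟩
  have hq2 : 2 ≤ q := by rw [hq]; exact Nat.one_lt_pow (by omega) hp.one_lt
  haveI hKp : CharP K p := by
    haveI h1 : CharP K (ringChar K) := ringChar.charP K
    obtain ⟨n, hrp, hcard⟩ := FiniteField.card K (ringChar K)
    have hpe : p ^ e = ringChar K ^ (n : ℕ) := by rw [← hcard, hK, hq]
    have hdvd : p ∣ ringChar K ^ (n : ℕ) := by
      rw [← hpe]
      exact dvd_pow_self p (by omega)
    have := hp.dvd_of_dvd_pow hdvd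
    have hPeq : p = ringChar K := ((Nat.prime_dvd_prime_iff_eq hp hrp).mp this)
    rwa [hPeq]
  haveI hRp : CharP R p := charP_of_injective_algebraMap (algebraMap K R).injective p
  haveI : ExpChar R p := ExpChar.prime hp
  obtain ⟨m, rfl⟩ : ∃ m, h = m + 1 := ⟨h - 1, by omega⟩
  constructor
  · intro hf
    exact part_one hq π u X hf
  intro hdvd
  set r : (Fin (m+1) → K) → R := fun c => ∑ i, algebraMap K R (c i) * X i with hrdef
  set P : Polynomial R := ∏ c : Fin (m+1) → K, (Polynomial.X - Polynomial.C (r c)) with hPdef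
  have hPm : P.Monic := monic_prod_of_monic _ _ fun _ _ => monic_X_sub_C _
  have hcard : Fintype.card (Fin (m+1) → K) = q ^ (m+1) := by
    rw [Fintype.card_fun, Fintype.card_fin, hK]
  have hPdeg : P.natDegree = q ^ (m+1) := by
    have h2 : ∀ c, (Polynomial.X - Polynomial.C (r c)).natDegree = 1 :=
      fun c => natDegree_X_sub_C _
    rw [hPdef, natDegree_prod_of_monic _ _ fun _ _ => monic_X_sub_C _,
      Finset.sum_congr rfl fun c _ => h2 c]
    simp [hcard]
  -- lower part of fPoly
  have hlowdeg : (Polynomial.C π * Polynomial.X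
      + ∑ k ∈ Finset.Ico 1 (m+1), Polynomial.C (u k) * Polynomial.X ^ q ^ k).natDegree
      ≤ q ^ m := by
    refine le_trans (natDegree_add_le _ _) ?_
    have h3 : (Polynomial.C π * Polynomial.X).natDegree ≤ 1 :=
      le_trans natDegree_mul_le (by simp)
    have h4 : (∑ k ∈ Finset.Ico 1 (m+1), Polynomial.C (u k) * Polynomial.X ^ q ^ k).natDegree
        ≤ q ^ m := by
      refine natDegree_sum_le_of_forall_le _ _ fun k hk => ?_
      refine le_trans natDegree_mul_le ?_
      rw [natDegree_C, natDegree_X_pow, zero_add]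
      exact Nat.pow_le_pow_right (by omega) (by
        have := Finset.mem_Ico.mp hk
        omega)
    have h5 : 1 ≤ q ^ m := Nat.one_le_pow _ _ (by omega)
    omega
  have hfm : (fPoly q (m+1) π u).Monic := by
    unfold fPoly
    rw [add_comm]
    refine monic_X_pow_add ?_
    have h1' := natDegree_le_iff_degree_le.mp hlowdeg
    refine lt_of_le_of_lt h1' ?_
    have hlt : q ^ m < q ^ (m+1) := Nat.pow_lt_pow_right (by omega) (by omega)
    exact_mod_cast hlt
  have hfdegle : (fPoly q (m+1) π u).natDegree ≤ q ^ (m+1) := by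
    unfold fPoly
    refine le_trans (natDegree_add_le _ _) ?_
    have h5 : q ^ m ≤ q ^ (m+1) := Nat.pow_le_pow_right (by omega) (by omega)
    have h6 : (Polynomial.X ^ q ^ (m+1) : Polynomial R).natDegree = q ^ (m+1) :=
      natDegree_X_pow _
    omega
  have hPf : P = fPoly q (m+1) π u :=
    aux_dvd_eq hPm hfm (by rw [hPdeg]; exact hfdegle) hdvd
  -- coefficient at X^1 of fPoly
  have hc1f : (fPoly q (m+1) π u).coeff 1 = π := by
    unfold fPoly
    rw [coeff_add, coeff_add, coeff_C_mul, coeff_X_one, mul_one, coeff_X_pow,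
      if_neg (by
        have h9 : q ^ 1 ≤ q ^ (m+1) := Nat.pow_le_pow_right (by omega) (by omega)
        rw [pow_one] at h9
        omega), finset_sum_coeff]
    rw [Finset.sum_eq_zero, add_zero, add_zero]
    intro k hk
    rw [coeff_C_mul, coeff_X_pow, if_neg, mul_zero]
    have hk1 := (Finset.mem_Ico.mp hk).1
    have h9 : q ^ 1 ≤ q ^ k := Nat.pow_le_pow_right (by omega) hk1
    rw [pow_one] at h9
    omega
  have hr0 : r 0 = 0 := by simp [hrdef]
  have hc1P : P.coeff 1 = ∏ c ∈ Finset.univ.erase (0 : Fin (m+1) → K), r c := by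
    rw [hPdef, aux_coeff_one_prod r 0 hr0, hcard]
    have h8 : ((-1 : R)) ^ (q ^ (m+1) - 1) = 1 := by
      have hqq : q ^ (m+1) = p ^ (e * (m+1)) := by rw [hq, ← pow_mul]
      rw [hqq]
      exact aux_neg_one_pow hp (e * (m+1))
    rw [h8, one_mul]
  have hpi : π = ∏ c ∈ Finset.univ.erase (0 : Fin (m+1) → K), r c := by
    rw [← hc1P, hPf, hc1f]
  -- transfer of the universal Moore identity
  have hmt : moore q X ^ (q - 1) = (-1) ^ (m+1) * π := by
    have hid := aux_moore_identity (K := K) (p := p) (e := e) (h := m+1) hp hq he hK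
    have hmap := congrArg (MvPolynomial.aeval X) hid
    rw [map_pow, map_mul, map_pow, map_neg, map_one, map_prod] at hmap
    have hψμ : MvPolynomial.aeval X
        (moore q (fun i => (MvPolynomial.X i : MvPolynomial (Fin (m+1)) K))) = moore q X := by
      unfold moore
      rw [AlgHom.map_det]
      congr 1
      funext i j
      simp only [AlgHom.mapMatrix_apply, Matrix.map_apply, Matrix.of_apply, map_pow,
        MvPolynomial.aeval_X]
    have hψlc : ∀ c : Fin (m+1) → K, MvPolynomial.aeval X (lc c) = r c := by
      intro c
      unfold lc
      rw [map_sum, hrdef]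
      refine Finset.sum_congr rfl fun i _ => ?_
      rw [map_mul, MvPolynomial.aeval_C, MvPolynomial.aeval_X]
    rw [hψμ, Finset.prod_congr rfl fun c _ => hψlc c] at hmap
    rw [hmap, ← hpi]
  refine ⟨hPf, hmt, ?_⟩
  -- last product identity
  set φ : Polynomial K →+* R := (Polynomial.aeval (moore q X) : Polynomial K →ₐ[K] R).toRingHom
    with hφ
  have hmapped := congrArg (Polynomial.map φ) (aux_prod_linear_univ (K := K) hK hq2)
  rw [Polynomial.map_prod] at hmapped
  have hfac : ∀ a : K, (Polynomial.X - Polynomial.C (Polynomial.C a * Polynomial.X)).map φ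
      = Polynomial.X - Polynomial.C (algebraMap K R a * moore q X) := by
    intro a
    rw [Polynomial.map_sub, Polynomial.map_X, Polynomial.map_C]
    congr 2
    rw [hφ]
    simp
  rw [Finset.prod_congr rfl fun a _ => hfac a, Polynomial.map_sub, Polynomial.map_pow,
    Polynomial.map_X, Polynomial.map_mul, Polynomial.map_C, Polynomial.map_X] at hmapped
  have hφx : φ ((Polynomial.X : Polynomial K) ^ (q-1)) = moore q X ^ (q-1) := by
    rw [hφ]; simp
  rw [hφx] at hmapped
  rw [hmapped, hmt]
  unfold gPoly
  simp only [Nat.add_sub_cancel]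
  have e1 : ((Polynomial.C ((-1:R) ^ m)) * (Polynomial.C ((-1:R) ^ m))) = 1 := by
    rw [← map_mul, ← pow_add, ← two_mul, pow_mul, neg_one_sq, one_pow, map_one]
  have e2 : Polynomial.C ((-1:R) ^ (m+1) * π) = -(Polynomial.C ((-1:R)^m) * Polynomial.C π) := by
    rw [← map_mul, ← map_neg]
    congr 1
    ring
  rw [e2]
  linear_combination ((-(Polynomial.X ^ q)) : Polynomial R) * e1
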